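/- Let G be a finite group, p a prime, x a p-element of G, and Z = Z(G) the center of G. Then spr_G(x) = spr_{G/Z}(xZ). -/

import Mathlib

open Subgroup

/-- `H` is normal in `K` (both subgroups of an ambient group). -/
def NormalIn {G : Type*} [Group G] (H K : Subgroup G) : Prop :=
  H ≤ K ∧ (H.subgroupOf K).Normal

/-- `H` is subnormal in `K`: there is a chain `H = H₀ ⊴ H₁ ⊴ ⋯ ⊴ Hₙ = K`. -/
def IsSubnormalIn {G : Type*} [Group G] (H K : Subgroup G) : Prop :=
  Relation.ReflTransGen NormalIn H K

/-- The Wielandt subnormalizer of `⟨x⟩` in `G`. -/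
def subnormalizerSet {G : Type*} [Group G] (x : G) : Set G :=
  {g : G | IsSubnormalIn (zpowers x) (zpowers x ⊔ zpowers g)}

/-- `spr_G(x) = |S_G(x)|/|G|`. -/
noncomputable def spr {G : Type*} [Group G] (x : G) : ℚ :=
  (Nat.card (subnormalizerSet x) : ℚ) / (Nat.card G : ℚ)


/-- `x` is a `p`-element: its order is a power of `p`. -/
def IsPElement (p : ℕ) {G : Type*} [Group G] (x : G) : Prop :=
  ∃ k : ℕ, orderOf x = p ^ k

lemma normalIn_iff {G : Type*} [Group G] {H K : Subgroup G} :
    NormalIn H K ↔ H ≤ K ∧ ∀ h ∈ H, ∀ k ∈ K, k * h * k⁻¹ ∈ H := by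
  constructor
  · rintro ⟨hle, hn⟩
    refine ⟨hle, fun h hh k hk => ?_⟩
    have := hn.conj_mem ⟨h, hle hh⟩ (by simpa [Subgroup.mem_subgroupOf] using hh) ⟨k, hk⟩
    simpa [Subgroup.mem_subgroupOf] using this
  · rintro ⟨hle, hn⟩
    refine ⟨hle, ⟨fun n hn' g => ?_⟩⟩
    simp only [Subgroup.mem_subgroupOf] at hn' ⊢
    exact hn n hn' g g.2

lemma normalIn_map {G G' : Type*} [Group G] [Group G'] (f : G →* G') {H K : Subgroup G}
    (h : NormalIn H K) : NormalIn (H.map f) (K.map f) := by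
  rw [normalIn_iff] at h ⊢
  refine ⟨Subgroup.map_mono h.1, ?_⟩
  rintro _ ⟨a, ha, rfl⟩ _ ⟨b, hb, rfl⟩
  refine ⟨b * a * b⁻¹, h.2 a ha b hb, by simp⟩

lemma normalIn_comap {G G' : Type*} [Group G] [Group G'] (f : G →* G') {H K : Subgroup G'}
    (h : NormalIn H K) : NormalIn (H.comap f) (K.comap f) := by
  rw [normalIn_iff] at h ⊢
  refine ⟨Subgroup.comap_mono h.1, fun a ha b hb => ?_⟩
  simp only [Subgroup.mem_comap, map_mul, map_inv] at *
  exact h.2 _ ha _ hb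

lemma normalIn_inf {G : Type*} [Group G] {H K : Subgroup G} (L : Subgroup G)
    (h : NormalIn H K) : NormalIn (H ⊓ L) (K ⊓ L) := by
  rw [normalIn_iff] at h ⊢
  refine ⟨inf_le_inf_right _ h.1, ?_⟩
  rintro a ⟨ha1, ha2⟩ b ⟨hb1, hb2⟩
  exact ⟨h.2 a ha1 b hb1, L.mul_mem (L.mul_mem hb2 ha2) (L.inv_mem hb2)⟩

lemma isSubnormalIn_map {G G' : Type*} [Group G] [Group G'] (f : G →* G') {H K : Subgroup G}
    (h : IsSubnormalIn H K) : IsSubnormalIn (H.map f) (K.map f) :=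
  Relation.ReflTransGen.lift (Subgroup.map f) (fun _ _ => normalIn_map f) _ _ h

lemma isSubnormalIn_comap {G G' : Type*} [Group G] [Group G'] (f : G →* G') {H K : Subgroup G'}
    (h : IsSubnormalIn H K) : IsSubnormalIn (H.comap f) (K.comap f) :=
  Relation.ReflTransGen.lift (Subgroup.comap f) (fun _ _ => normalIn_comap f) _ _ h

lemma isSubnormalIn_inf {G : Type*} [Group G] {H K : Subgroup G} (L : Subgroup G)
    (h : IsSubnormalIn H K) : IsSubnormalIn (H ⊓ L) (K ⊓ L) :=
  Relation.ReflTransGen.lift (fun A => A ⊓ L) (fun _ _ => normalIn_inf L) _ _ h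

lemma key_iff {G : Type*} [Group G] (x g : G) :
    g ∈ subnormalizerSet x ↔
      (QuotientGroup.mk g : G ⧸ center G) ∈
        subnormalizerSet (QuotientGroup.mk x : G ⧸ center G) := by
  set Z := center G
  set π := QuotientGroup.mk' Z with hπ
  have hker : π.ker = Z := QuotientGroup.ker_mk' Z
  constructor
  · intro h
    have := isSubnormalIn_map π h
    simpa [hπ, subnormalizerSet, Subgroup.map_sup, MonoidHom.map_zpowers] using this
  · intro h
    have h' := isSubnormalIn_comap π h
    set M : Subgroup G := zpowers x ⊔ zpowers g with hM
    have hmx : (QuotientGroup.mk x : G ⧸ Z) = π x := rfl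
    have hmg : (QuotientGroup.mk g : G ⧸ Z) = π g := rfl
    have hx : (zpowers (QuotientGroup.mk x : G ⧸ Z)).comap π = zpowers x ⊔ Z := by
      rw [hmx, ← MonoidHom.map_zpowers, Subgroup.comap_map_eq, hker]
    have hxg : (zpowers (QuotientGroup.mk x : G ⧸ Z) ⊔
        zpowers (QuotientGroup.mk g : G ⧸ Z)).comap π = M ⊔ Z := by
      rw [hmx, hmg, ← MonoidHom.map_zpowers, ← MonoidHom.map_zpowers, ← Subgroup.map_sup,
        Subgroup.comap_map_eq, hker]
    rw [subnormalizerSet, Set.mem_setOf_eq] at h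
    have h2 : IsSubnormalIn ((zpowers x ⊔ Z) ⊓ M) ((M ⊔ Z) ⊓ M) := by
      have := isSubnormalIn_inf M h'
      rwa [hx, hxg] at this
    have hMM : (M ⊔ Z) ⊓ M = M := inf_eq_right.2 le_sup_left
    rw [hMM] at h2
    -- zpowers x ⊔ Z centralizes x
    have hcent : zpowers x ⊔ Z ≤ centralizer {x} := by
      refine sup_le ?_ (Subgroup.center_le_centralizer _)
      rw [zpowers_le]
      exact Subgroup.mem_centralizer_iff.2 (by rintro s rfl; rfl)
    have hstep : NormalIn (zpowers x) ((zpowers x ⊔ Z) ⊓ M) := by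
      rw [normalIn_iff]
      refine ⟨le_inf le_sup_left (le_sup_left : zpowers x ≤ M), ?_⟩
      rintro h hh k ⟨hk1, hk2⟩
      obtain ⟨m, rfl⟩ := Subgroup.mem_zpowers_iff.1 hh
      have hc : Commute k x := by
        have := Subgroup.mem_centralizer_iff.1 (hcent hk1) x rfl
        exact this.symm
      have : k * x ^ m * k⁻¹ = x ^ m := by
        rw [(hc.zpow_right m).eq, mul_assoc, mul_inv_cancel, mul_one]
      rw [this]
      exact Subgroup.mem_zpowers_iff.2 ⟨m, rfl⟩
    exact Relation.ReflTransGen.head hstep h2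

theorem stmt7 {G : Type*} [Group G] [Finite G] (p : ℕ) (hp : p.Prime)
    (x : G) (hxp : IsPElement p x) :
    spr x = spr (QuotientGroup.mk x : G ⧸ Subgroup.center G) := by
  set Z := center G
  set xb : G ⧸ Z := QuotientGroup.mk x
  have hset : subnormalizerSet x = QuotientGroup.mk ⁻¹' (subnormalizerSet xb) := by
    ext g
    exact key_iff x g
  have hcard : Nat.card (subnormalizerSet x) =
      Nat.card Z * Nat.card (subnormalizerSet xb) := by
    rw [hset, Nat.card_congr (QuotientGroup.preimageMkEquivSubgroupProdSet Z
      (subnormalizerSet xb)), Nat.card_prod]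
  have hG : Nat.card G = Nat.card (G ⧸ Z) * Nat.card Z :=
    Subgroup.card_eq_card_quotient_mul_card_subgroup Z
  have hZ : (Nat.card Z : ℚ) ≠ 0 := by
    exact_mod_cast Nat.card_pos.ne'
  rw [spr, spr, hcard, hG]
  push_cast
  rw [mul_comm (Nat.card (G ⧸ Z) : ℚ)]
  rw [mul_div_mul_left _ _ hZ]
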